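/- Decay of the Fourier transform of the unit interval indicator: there exist constants C > 0 and N > 0 (depending only on α) such that for all λ ≥ N, |∫_0^1 j_α(λx)·x^{2α+1} dx| ≤ C·λ^{−α−3/2}. -/

import Mathlib

open MeasureTheory Real Set ENNReal ComplexOrder

noncomputable section

/-- The Haar measure `ω_α(dz) = z^(2α+1) dz` of the Bessel–Kingman hypergroup,
supported on `(0, ∞)`. -/
def omegaM (α : ℝ) : Measure ℝ :=
  (volume.restrict (Set.Ioi (0:ℝ))).withDensity fun z => ENNReal.ofReal (z ^ (2*α+1))

/-- The interval `I_{n+1} = [n, n+1)` (0-based reindexing of the paper's `I_n = [n-1, n)`). -/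
def In (n : ℕ) : Set ℝ := Set.Ico (n : ℝ) ((n : ℝ) + 1)

/-- `ω_α`-measure of the `n`-th interval. -/
def wn (α : ℝ) (n : ℕ) : ℝ≥0∞ := omegaM α (In n)

/-- The discrete amalgam norm `‖f‖_{p,q}` (with the conventions of the paper for
`p = ∞` or `q = ∞`, where the corresponding integral/sum becomes a supremum). -/
def amalgamNorm (α : ℝ) (p q : ℝ≥0∞) {E : Type*} [NormedAddCommGroup E] (f : ℝ → E) : ℝ≥0∞ :=
  let A : ℕ → ℝ≥0∞ := fun n =>
    if p = ∞ then ⨆ x ∈ In n, (‖f x‖₊ : ℝ≥0∞)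
    else ((wn α n)⁻¹ * ∫⁻ x in In n, (‖f x‖₊ : ℝ≥0∞) ^ p.toReal ∂(omegaM α)) ^ (1/p.toReal)
  if q = ∞ then ⨆ n, A n
  else (∑' n, wn α n * (A n) ^ q.toReal) ^ (1/q.toReal)

/-- The constant `C_Γ = Γ(α+1)/(Γ(1/2)·Γ(α+1/2)·2^(2α-1))`. -/
def CGamma (α : ℝ) : ℝ :=
  Real.Gamma (α+1) / (Real.Gamma (1/2) * Real.Gamma (α+1/2) * (2:ℝ) ^ (2*α-1))

/-- The Bessel–Kingman kernel `K_α(x,y,z)`. -/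
def Kker (α x y z : ℝ) : ℝ :=
  CGamma α * ((z^2 - (x-y)^2) * ((x+y)^2 - z^2)) ^ (α - 1/2) / (x*y*z) ^ (2*α)

/-- The hypergroup translation `τ_y f(x)`, with the conventions `τ_0 f = f` and
`τ_y f(0) = f(y)`. -/
def tau {E : Type*} [NormedAddCommGroup E] [NormedSpace ℝ E]
    (α y : ℝ) (f : ℝ → E) (x : ℝ) : E :=
  if y = 0 then f x
  else if x = 0 then f y
  else ∫ z in |x - y|..(x + y), (Kker α x y z * z ^ (2*α+1)) • f z

/-- The hypergroup convolution `(f ⊛ g)(x) = ∫_0^∞ f(y)·τ_y g(x)·y^(2α+1) dy`. -/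
def convBK (α : ℝ) (f g : ℝ → ℂ) (x : ℝ) : ℂ :=
  ∫ y in Set.Ioi (0:ℝ), (y ^ (2*α+1)) • (f y * tau α y g x)

/-- The modified Bessel function `j_α`. -/
def jBessel (α x : ℝ) : ℝ :=
  ∑' k : ℕ, (-1)^k * Real.Gamma (α+1) / (2^(2*k) * (k.factorial : ℝ) * Real.Gamma (α + k + 1))
    * x^(2*k)

/-- The hypergroup Fourier transform `f̂(λ) = ∫_0^∞ f(x)·j_α(λx)·x^(2α+1) dx`. -/
def fourierBK (α : ℝ) (f : ℝ → ℂ) (lam : ℝ) : ℂ :=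
  ∫ x in Set.Ioi (0:ℝ), (jBessel α (lam * x) * x ^ (2*α+1)) • f x

/-- The continuous `(p,∞)`-amalgam norm
`sup_{y ≥ 0} (∫_0^∞ |f(x)|^p · τ_y 1_{[0,1]}(x) · x^(2α+1) dx)^(1/p)`. -/
def contNorm (α p : ℝ) {E : Type*} [NormedAddCommGroup E] (f : ℝ → E) : ℝ≥0∞ :=
  ⨆ y ∈ Set.Ici (0:ℝ),
    (∫⁻ x, (‖f x‖₊ : ℝ≥0∞) ^ p *
        ENNReal.ofReal (tau α y ((Set.Icc (0:ℝ) 1).indicator 1) x) ∂(omegaM α)) ^ (1/p)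

/-- The weight `ω_n = ∫_{n-1}^{n} z^(2α+1) dz`, as a real number. -/
def wIn (α : ℝ) (n : ℕ) : ℝ := ∫ z in ((n:ℝ)-1)..(n:ℝ), z ^ (2*α+1)

namespace BKaux

/-- coefficients of the modified Bessel series -/
def aco (β : ℝ) (k : ℕ) : ℝ :=
  (-1)^k * Real.Gamma (β+1) / (4^k * (k.factorial : ℝ) * Real.Gamma (β+k+1))

lemma Gamma_shift_pos {β : ℝ} (hβ : 0 ≤ β) (k : ℕ) : 0 < Real.Gamma (β+k+1) := by
  apply Real.Gamma_pos_of_pos; positivity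

lemma Gamma_shift_ge {β : ℝ} (hβ : 0 ≤ β) (k : ℕ) :
    Real.Gamma (β+1) ≤ Real.Gamma (β+k+1) := by
  induction k with
  | zero => simp
  | succ n ih =>
      have h : (β + (n+1:ℕ) + 1) = (β + n + 1) + 1 := by push_cast; ring
      rw [h]
      rw [show Real.Gamma ((β+n+1)+1) = (β+n+1) * Real.Gamma (β+n+1) from
        Real.Gamma_add_one (by positivity)]
      calc Real.Gamma (β+1) ≤ Real.Gamma (β+n+1) := ih
        _ ≤ (β+n+1) * Real.Gamma (β+n+1) := by
            nlinarith [Gamma_shift_pos hβ n, Nat.cast_nonneg (α := ℝ) n]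

lemma abs_aco_le {β : ℝ} (hβ : 0 ≤ β) (k : ℕ) :
    |aco β k| ≤ 1 / (4^k * (k.factorial : ℝ)) := by
  have h1 := Gamma_shift_pos hβ k
  have h2 := Gamma_shift_ge hβ k
  have h3 : 0 < Real.Gamma (β+1) := Real.Gamma_pos_of_pos (by linarith)
  have h4 : (0:ℝ) < 4^k * (k.factorial : ℝ) := by positivity
  rw [aco, abs_div, abs_mul, abs_pow, abs_neg, abs_one, one_pow, one_mul,
    abs_of_pos h3, abs_of_pos (by positivity : (0:ℝ) < 4^k * (k.factorial:ℝ) * Real.Gamma (β+k+1))]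
  rw [div_le_div_iff₀ (by positivity) h4]
  calc Real.Gamma (β+1) * (4^k * (k.factorial:ℝ))
      ≤ Real.Gamma (β+k+1) * (4^k * (k.factorial:ℝ)) := by nlinarith
    _ = 1 * (4^k * (k.factorial:ℝ) * Real.Gamma (β+k+1)) := by ring

end BKaux

namespace BKaux

lemma k_le_four_pow (k : ℕ) : (k:ℝ) ≤ 4^k := by
  have h : (k:ℝ) < 2^k := by exact_mod_cast Nat.lt_two_pow_self (n := k)
  calc (k:ℝ) ≤ 2^k := h.le
    _ ≤ 4^k := by gcongr; norm_num

/-- the three term functions -/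
def g0 (β : ℝ) (k : ℕ) (x : ℝ) : ℝ := aco β k * x^(2*k)
def g1 (β : ℝ) (k : ℕ) (x : ℝ) : ℝ := aco β k * ((2*k : ℕ):ℝ) * x^(2*k-1)
def g2 (β : ℝ) (k : ℕ) (x : ℝ) : ℝ :=
  aco β k * ((2*k : ℕ):ℝ) * ((2*k-1 : ℕ):ℝ) * x^(2*k-1-1)

lemma pow_abs_le {R x : ℝ} (hR : 1 ≤ R) (hx : |x| ≤ R) {e k : ℕ} (he : e ≤ 2*k) :
    |x|^e ≤ (R^2)^k := by
  calc |x|^e ≤ R^e := pow_le_pow_left₀ (abs_nonneg x) hx e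
    _ ≤ R^(2*k) := pow_le_pow_right₀ hR he
    _ = (R^2)^k := by rw [pow_mul]

lemma bound0 {β R x : ℝ} (hβ : 0 ≤ β) (hR : 1 ≤ R) (hx : |x| ≤ R) (k : ℕ) :
    |g0 β k x| ≤ (R^2)^k / (k.factorial : ℝ) := by
  have h1 := abs_aco_le hβ k
  have h2 : |x|^(2*k) ≤ (R^2)^k := pow_abs_le hR hx le_rfl
  have h4 : (1:ℝ) ≤ 4^k := one_le_pow₀ (by norm_num : (1:ℝ) ≤ 4)
  have hf : (0:ℝ) < k.factorial := by positivity
  have := calc |g0 β k x| = |aco β k| * |x|^(2*k) := by rw [g0, abs_mul, abs_pow]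
    _ ≤ (1 / (4^k * (k.factorial:ℝ))) * (R^2)^k := by
        apply mul_le_mul h1 h2 (by positivity) (by positivity)
    _ ≤ (R^2)^k / (k.factorial:ℝ) := by
        rw [div_mul_eq_mul_div, one_mul, div_le_div_iff₀ (by positivity) hf]
        calc (R^2)^k * (k.factorial:ℝ) ≤ (R^2)^k * (k.factorial:ℝ) * 4^k := by
              nlinarith [mul_nonneg (mul_nonneg (pow_nonneg (sq_nonneg R) k) hf.le) (sub_nonneg.mpr h4)]
          _ = (R^2)^k * (4^k * (k.factorial:ℝ)) := by ring
  exact this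

lemma bound1 {β R x : ℝ} (hβ : 0 ≤ β) (hR : 1 ≤ R) (hx : |x| ≤ R) (k : ℕ) :
    |g1 β k x| ≤ 2 * (R^2)^k / (k.factorial : ℝ) := by
  have h1 := abs_aco_le hβ k
  have h2 : |x|^(2*k-1) ≤ (R^2)^k := pow_abs_le hR hx (Nat.sub_le _ _)
  have hk : ((2*k : ℕ):ℝ) ≤ 2 * 4^k := by
    push_cast; nlinarith [k_le_four_pow k]
  have hf : (0:ℝ) < k.factorial := by positivity
  have h4 : (1:ℝ) ≤ 4^k := one_le_pow₀ (by norm_num : (1:ℝ) ≤ 4)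
  calc |g1 β k x| = |aco β k| * ((2*k : ℕ):ℝ) * |x|^(2*k-1) := by
        rw [g1, abs_mul, abs_mul, abs_pow, Nat.abs_cast]
    _ ≤ (1 / (4^k * (k.factorial:ℝ))) * (2 * 4^k) * (R^2)^k := by
        apply mul_le_mul _ h2 (by positivity) (by positivity)
        exact mul_le_mul h1 hk (by positivity) (by positivity)
    _ = 2 * (R^2)^k / (k.factorial:ℝ) := by
        field_simp

lemma bound2 {β R x : ℝ} (hβ : 0 ≤ β) (hR : 1 ≤ R) (hx : |x| ≤ R) (k : ℕ) :
    |g2 β k x| ≤ 4 * (R^2)^k / (k.factorial : ℝ) := by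
  have h1 := abs_aco_le hβ k
  have h2 : |x|^(2*k-1-1) ≤ (R^2)^k := pow_abs_le hR hx (le_trans (Nat.sub_le _ _) (Nat.sub_le _ _))
  have hk : ((2*k : ℕ):ℝ) * ((2*k-1 : ℕ):ℝ) ≤ 4 * 4^k := by
    have hle : ((2*k-1 : ℕ):ℝ) ≤ 2*k := by
      have : (2*k-1 : ℕ) ≤ 2*k := Nat.sub_le _ _
      exact_mod_cast (Nat.cast_le.mpr this).trans_eq (by push_cast; ring)
    have hk2 : ((k:ℝ))^2 ≤ 4^k := by
      have h : (k:ℝ) < 2^k := by exact_mod_cast Nat.lt_two_pow_self (n := k)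
      calc ((k:ℝ))^2 ≤ (2^k)^2 := by nlinarith [Nat.cast_nonneg (α := ℝ) k]
        _ = 4^k := by rw [← pow_mul, mul_comm, pow_mul]; norm_num
    push_cast at hle ⊢
    nlinarith [Nat.cast_nonneg (α := ℝ) k, Nat.cast_nonneg (α := ℝ) (2*k-1)]
  have hf : (0:ℝ) < k.factorial := by positivity
  calc |g2 β k x| = |aco β k| * ((2*k : ℕ):ℝ) * ((2*k-1 : ℕ):ℝ) * |x|^(2*k-1-1) := by
        rw [g2, abs_mul, abs_mul, abs_mul, abs_pow, Nat.abs_cast, Nat.abs_cast]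
    _ ≤ (1 / (4^k * (k.factorial:ℝ))) * (4 * 4^k) * (R^2)^k := by
        apply mul_le_mul _ h2 (by positivity) (by positivity)
        calc |aco β k| * ((2*k : ℕ):ℝ) * ((2*k-1 : ℕ):ℝ)
            ≤ (1 / (4^k * (k.factorial:ℝ))) * (((2*k : ℕ):ℝ) * ((2*k-1 : ℕ):ℝ)) := by
              rw [mul_assoc]
              exact mul_le_mul h1 le_rfl (by positivity) (by positivity)
          _ ≤ (1 / (4^k * (k.factorial:ℝ))) * (4 * 4^k) := by
              exact mul_le_mul le_rfl hk (by positivity) (by positivity)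
    _ = 4 * (R^2)^k / (k.factorial:ℝ) := by
        field_simp

lemma summableBound (c R : ℝ) : Summable (fun k : ℕ => c * (R^2)^k / (k.factorial : ℝ)) := by
  have := (Real.summable_pow_div_factorial (R^2)).mul_left c
  simpa [mul_div_assoc] using this

end BKaux

namespace BKaux

def jb (β x : ℝ) : ℝ := ∑' k, g0 β k x
def jb1 (β x : ℝ) : ℝ := ∑' k, g1 β k x
def jb2 (β x : ℝ) : ℝ := ∑' k, g2 β k x

lemma summable_g0 {β : ℝ} (hβ : 0 ≤ β) (x : ℝ) : Summable (g0 β · x) :=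
  Summable.of_norm_bounded (summableBound 1 (|x|+1)) fun k => by
    simpa [Real.norm_eq_abs, one_mul] using
      bound0 hβ (by linarith [abs_nonneg x] : (1:ℝ) ≤ |x|+1) (by linarith [abs_nonneg x]) k

lemma summable_g1 {β : ℝ} (hβ : 0 ≤ β) (x : ℝ) : Summable (g1 β · x) :=
  Summable.of_norm_bounded (summableBound 2 (|x|+1)) fun k => by
    simpa [Real.norm_eq_abs] using
      bound1 hβ (by linarith [abs_nonneg x] : (1:ℝ) ≤ |x|+1) (by linarith [abs_nonneg x]) k

lemma summable_g2 {β : ℝ} (hβ : 0 ≤ β) (x : ℝ) : Summable (g2 β · x) :=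
  Summable.of_norm_bounded (summableBound 4 (|x|+1)) fun k => by
    simpa [Real.norm_eq_abs] using
      bound2 hβ (by linarith [abs_nonneg x] : (1:ℝ) ≤ |x|+1) (by linarith [abs_nonneg x]) k

lemma hasDerivAt_g0 (β : ℝ) (k : ℕ) (x : ℝ) : HasDerivAt (g0 β k ·) (g1 β k x) x := by
  have h := (hasDerivAt_pow (2*k) x).const_mul (aco β k)
  simpa [g0, g1, mul_assoc] using h

lemma hasDerivAt_g1 (β : ℝ) (k : ℕ) (x : ℝ) : HasDerivAt (g1 β k ·) (g2 β k x) x := by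
  have h := (hasDerivAt_pow (2*k-1) x).const_mul (aco β k * ((2*k : ℕ):ℝ))
  simpa [g1, g2, mul_assoc] using h

lemma hasDerivAt_jb {β : ℝ} (hβ : 0 ≤ β) (x : ℝ) : HasDerivAt (jb β) (jb1 β x) x := by
  have hR : (1:ℝ) ≤ |x|+1 := by linarith [abs_nonneg x]
  refine hasDerivAt_tsum_of_isPreconnected
    (summableBound 2 (|x|+1)) Metric.isOpen_ball (convex_ball (0:ℝ) (|x|+1)).isPreconnected
    (fun n y _ => hasDerivAt_g0 β n y)
    (fun n y hy => ?_) ?_ (summable_g0 hβ 0) ?_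
  · have hyR : |y| ≤ |x|+1 := by
      have := mem_ball_zero_iff.mp hy; rw [Real.norm_eq_abs] at this; linarith
    simpa [Real.norm_eq_abs] using bound1 hβ hR hyR n
  · simp only [Metric.mem_ball, dist_zero_right, Real.norm_eq_abs, abs_zero]
    linarith [abs_nonneg x]
  · simp only [Metric.mem_ball, dist_zero_right, Real.norm_eq_abs]
    linarith

lemma hasDerivAt_jb1 {β : ℝ} (hβ : 0 ≤ β) (x : ℝ) : HasDerivAt (jb1 β) (jb2 β x) x := by
  have hR : (1:ℝ) ≤ |x|+1 := by linarith [abs_nonneg x]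
  refine hasDerivAt_tsum_of_isPreconnected
    (summableBound 4 (|x|+1)) Metric.isOpen_ball (convex_ball (0:ℝ) (|x|+1)).isPreconnected
    (fun n y _ => hasDerivAt_g1 β n y)
    (fun n y hy => ?_) ?_ (summable_g1 hβ 0) ?_
  · have hyR : |y| ≤ |x|+1 := by
      have := mem_ball_zero_iff.mp hy; rw [Real.norm_eq_abs] at this; linarith
    simpa [Real.norm_eq_abs] using bound2 hβ hR hyR n
  · simp only [Metric.mem_ball, dist_zero_right, Real.norm_eq_abs, abs_zero]
    linarith [abs_nonneg x]
  · simp only [Metric.mem_ball, dist_zero_right, Real.norm_eq_abs]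
    linarith

end BKaux

namespace BKaux

lemma aco_zero (β : ℝ) (hβ : 0 ≤ β) : aco β 0 = 1 := by
  have h : Real.Gamma (β+1) ≠ 0 := (Real.Gamma_pos_of_pos (by linarith)).ne'
  simp [aco]
  field_simp
  exact h

lemma aco_rec {β : ℝ} (hβ : 0 ≤ β) (k : ℕ) :
    aco β (k+1) * (4*((k:ℝ)+1)*(β+k+1)) = - aco β k := by
  have h0 : (β + k + 1) ≠ 0 := by positivity
  have hG : Real.Gamma (β+((k+1:ℕ):ℝ)+1) = (β+k+1) * Real.Gamma (β+k+1) := by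
    rw [show β+((k+1:ℕ):ℝ)+1 = (β+(k:ℝ)+1)+1 by push_cast; ring]
    exact Real.Gamma_add_one h0
  have hGpos := Gamma_shift_pos hβ k
  unfold aco
  rw [hG, pow_succ, Nat.factorial_succ]
  push_cast
  field_simp
  ring

lemma aco_step {α : ℝ} (hα : 0 ≤ α) (k : ℕ) :
    (α+1+(k:ℝ)) * aco (α+1) k = (α+1) * aco α k := by
  have h1 : Real.Gamma (α+1+1) = (α+1) * Real.Gamma (α+1) := Real.Gamma_add_one (by positivity)
  have h2 : Real.Gamma (α+1+(k:ℝ)+1) = (α+(k:ℝ)+1) * Real.Gamma (α+(k:ℝ)+1) := by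
    rw [show α+1+(k:ℝ)+1 = (α+(k:ℝ)+1)+1 by ring]
    exact Real.Gamma_add_one (by positivity)
  have hGpos := Gamma_shift_pos hα k
  have hGpos' : (0:ℝ) < α+(k:ℝ)+1 := by positivity
  unfold aco
  rw [h2, h1]
  field_simp
  ring

/-- the Bessel ODE -/
lemma jb_ode {β : ℝ} (hβ : 0 ≤ β) (x : ℝ) :
    x * jb2 β x + (2*β+1) * jb1 β x + x * jb β x = 0 := by
  have s0 := summable_g0 hβ x
  have s1 := summable_g1 hβ x
  have s2 := summable_g2 hβ x
  have key : ∑' k, (x * g2 β k x + (2*β+1) * g1 β k x) = ∑' k, -(x * g0 β k x) := by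
    rw [Summable.tsum_eq_zero_add ((s2.mul_left x).add (s1.mul_left (2*β+1)))]
    have h0 : x * g2 β 0 x + (2*β+1) * g1 β 0 x = 0 := by simp [g2, g1]
    rw [h0, zero_add]
    apply tsum_congr
    intro k
    have hrec := aco_rec hβ k
    show x * g2 β (k+1) x + (2*β+1) * g1 β (k+1) x = -(x * g0 β k x)
    unfold g0 g1 g2
    have e1 : 2*(k+1)-1-1 = 2*k := by omega
    have e2 : 2*(k+1)-1 = 2*k+1 := by omega
    rw [e1, e2]
    push_cast
    linear_combination (x * x^(2*k)) * hrec
  have lhs : x * jb2 β x + (2*β+1) * jb1 β x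
      = ∑' k, (x * g2 β k x + (2*β+1) * g1 β k x) := by
    rw [jb2, jb1, ← tsum_mul_left, ← tsum_mul_left,
      ← Summable.tsum_add (s2.mul_left x) (s1.mul_left (2*β+1))]
  have rhs : ∑' k, -(x * g0 β k x) = -(x * jb β x) := by
    rw [tsum_neg, tsum_mul_left, jb]
  rw [lhs, key, rhs]; ring

/-- the recurrence linking `jb (α+1)` and `jb α` -/
lemma jb_step {α : ℝ} (hα : 0 ≤ α) (y : ℝ) :
    y * jb1 (α+1) y + (2*α+2) * jb (α+1) y = (2*α+2) * jb α y := by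
  have hβ : (0:ℝ) ≤ α + 1 := by linarith
  have s0 := summable_g0 hβ y
  have s1 := summable_g1 hβ y
  have lhs : y * jb1 (α+1) y + (2*α+2) * jb (α+1) y
      = ∑' k, (y * g1 (α+1) k y + (2*α+2) * g0 (α+1) k y) := by
    rw [jb1, jb, ← tsum_mul_left, ← tsum_mul_left,
      ← Summable.tsum_add (s1.mul_left y) (s0.mul_left (2*α+2))]
  rw [lhs, jb, ← tsum_mul_left]
  apply tsum_congr
  intro k
  have hstep := aco_step hα k
  unfold g0 g1
  cases k with
  | zero =>
      simp [aco_zero α hα, aco_zero (α+1) hβ]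
  | succ n =>
      have e2 : 2*(n+1)-1 = 2*n+1 := by omega
      rw [e2]
      push_cast at hstep ⊢
      linear_combination (2 * y^(2*n+1) * y) * hstep

end BKaux

namespace BKaux

def uu (β x : ℝ) : ℝ := x ^ (β+1/2) * jb β x
def uu1 (β x : ℝ) : ℝ := (β+1/2) * x^(β-1/2) * jb β x + x^(β+1/2) * jb1 β x
def EE (β x : ℝ) : ℝ := (uu1 β x)^2 + (uu β x)^2
def phi (β x : ℝ) : ℝ := EE β x * Real.exp ((β^2-1/4)/x)

lemma hasDerivAt_uu {β x : ℝ} (hβ : 0 ≤ β) (hx : 0 < x) :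
    HasDerivAt (uu β) (uu1 β x) x := by
  have d1 : HasDerivAt (fun y : ℝ => y ^ (β+1/2)) ((β+1/2) * x^(β+1/2-1)) x :=
    Real.hasDerivAt_rpow_const (Or.inl hx.ne')
  have h := d1.mul (hasDerivAt_jb hβ x)
  have e : β+1/2-1 = β-1/2 := by ring
  rw [e] at h
  have heq : uu1 β x = (β+1/2) * x^(β-1/2) * jb β x + x^(β+1/2) * jb1 β x := rfl
  rw [heq]
  exact h

lemma hasDerivAt_uu1 {β x : ℝ} (hβ : 0 ≤ β) (hx : 0 < x) :
    HasDerivAt (uu1 β) (((β^2-1/4)/x^2 - 1) * uu β x) x := by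
  have d1 : HasDerivAt (fun y : ℝ => y ^ (β-1/2)) ((β-1/2) * x^(β-1/2-1)) x :=
    Real.hasDerivAt_rpow_const (Or.inl hx.ne')
  have d2 : HasDerivAt (fun y : ℝ => y ^ (β+1/2)) ((β+1/2) * x^(β+1/2-1)) x :=
    Real.hasDerivAt_rpow_const (Or.inl hx.ne')
  have h := ((d1.const_mul (β+1/2)).mul (hasDerivAt_jb hβ x)).add
    (d2.mul (hasDerivAt_jb1 hβ x))
  have e0 : β-1/2-1 = β-3/2 := by ring
  have e0' : β+1/2-1 = β-1/2 := by ring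
  rw [e0, e0'] at h
  have hD : HasDerivAt (uu1 β)
      ((β+1/2) * ((β-1/2) * x ^ (β-3/2)) * jb β x + (β+1/2) * x^(β-1/2) * jb1 β x +
        ((β+1/2) * x^(β-1/2) * jb1 β x + x^(β+1/2) * jb2 β x)) x := h
  have e1 : x ^ (β-1/2) = x ^ (β-3/2) * x := by
    rw [← Real.rpow_add_one hx.ne']; congr 1; ring
  have e2 : x ^ (β+1/2) = x ^ (β-3/2) * x * x := by
    rw [← Real.rpow_add_one hx.ne', ← Real.rpow_add_one hx.ne']; congr 1; ring
  have hode := jb_ode hβ x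
  have e3 : (β^2-1/4)/x^2 * (x ^ (β-3/2) * x * x) = (β^2-1/4) * x ^ (β-3/2) := by
    field_simp
  have heq : ((β^2-1/4)/x^2 - 1) * uu β x
      = (β+1/2) * ((β-1/2) * x ^ (β-3/2)) * jb β x + (β+1/2) * x^(β-1/2) * jb1 β x +
        ((β+1/2) * x^(β-1/2) * jb1 β x + x^(β+1/2) * jb2 β x) := by
    rw [uu, e1, e2]
    linear_combination jb β x * e3 + (-(x^(β-3/2) * x)) * hode
  rw [heq]
  exact hD

lemma hasDerivAt_phi {β x : ℝ} (hβ : 0 ≤ β) (hx : 0 < x) :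
    HasDerivAt (phi β)
      (-(Real.exp ((β^2-1/4)/x) * ((β^2-1/4)/x^2) * (uu1 β x - uu β x)^2)) x := by
  have hu := hasDerivAt_uu hβ hx
  have hu1 := hasDerivAt_uu1 hβ hx
  have hE : HasDerivAt (EE β) (2 * uu β x * uu1 β x * ((β^2-1/4)/x^2)) x := by
    have h := (hu1.mul hu1).add (hu.mul hu)
    have h2 : HasDerivAt (EE β)
        ((((β^2-1/4)/x^2 - 1) * uu β x) * uu1 β x + uu1 β x * (((β^2-1/4)/x^2 - 1) * uu β x)
          + (uu1 β x * uu β x + uu β x * uu1 β x)) x := by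
      have e : EE β = uu1 β * uu1 β + uu β * uu β := by
        funext y; simp only [EE, Pi.add_apply, Pi.mul_apply]; ring
      rw [e]; exact h
    convert h2 using 1
    ring
  have hinv : HasDerivAt (fun y : ℝ => (β^2-1/4)/y) (-((β^2-1/4)/x^2)) x := by
    have h2 := (hasDerivAt_inv hx.ne').const_mul (β^2-1/4)
    have heq : -((β^2-1/4)/x^2) = (β^2-1/4) * (-(x^2)⁻¹) := by field_simp
    rw [heq]
    simpa [div_eq_mul_inv] using h2
  have hexp : HasDerivAt (fun y : ℝ => Real.exp ((β^2-1/4)/y))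
      (Real.exp ((β^2-1/4)/x) * (-((β^2-1/4)/x^2))) x :=
    (Real.hasDerivAt_exp ((β^2-1/4)/x)).comp x hinv
  have h := hE.mul hexp
  have heq2 : -(Real.exp ((β^2-1/4)/x) * ((β^2-1/4)/x^2) * (uu1 β x - uu β x)^2)
      = 2 * uu β x * uu1 β x * ((β^2-1/4)/x^2) * Real.exp ((β^2-1/4)/x)
        + EE β x * (Real.exp ((β^2-1/4)/x) * (-((β^2-1/4)/x^2))) := by
    unfold EE; ring
  rw [heq2]
  exact h

lemma jb_decay {β : ℝ} (hβ : 3/2 ≤ β) :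
    ∃ M : ℝ, 0 < M ∧ ∀ x : ℝ, 1 ≤ x → |jb β x| ≤ M * x ^ (-(β+1/2)) := by
  have hβ0 : (0:ℝ) ≤ β := by linarith
  have hc : (0:ℝ) ≤ β^2 - 1/4 := by nlinarith
  set c : ℝ := β^2 - 1/4 with hcdef
  -- phi is antitone on [1, ∞)
  have hanti : AntitoneOn (phi β) (Set.Ici 1) := by
    apply antitoneOn_of_deriv_nonpos (convex_Ici 1)
    · intro x hx
      have hx0 : (0:ℝ) < x := lt_of_lt_of_le one_pos hx
      exact (hasDerivAt_phi hβ0 hx0).continuousAt.continuousWithinAt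
    · intro x hx
      rw [interior_Ici] at hx
      have hx0 : (0:ℝ) < x := lt_trans one_pos hx
      exact ((hasDerivAt_phi hβ0 hx0).differentiableAt).differentiableWithinAt
    · intro x hx
      rw [interior_Ici] at hx
      have hx0 : (0:ℝ) < x := lt_trans one_pos hx
      rw [(hasDerivAt_phi hβ0 hx0).deriv]
      have h1 : (0:ℝ) ≤ Real.exp ((β^2-1/4)/x) * ((β^2-1/4)/x^2) * (uu1 β x - uu β x)^2 := by
        have hq : (0:ℝ) ≤ (β^2-1/4)/x^2 := by positivity
        positivity
      linarith
  set M2 : ℝ := EE β 1 * Real.exp c with hM2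
  have hM2nn : 0 ≤ M2 := by
    apply mul_nonneg _ (Real.exp_nonneg _)
    unfold EE; positivity
  refine ⟨Real.sqrt M2 + 1, by positivity, fun x hx1 => ?_⟩
  have hx0 : (0:ℝ) < x := lt_of_lt_of_le one_pos hx1
  have hEx : EE β x ≤ M2 := by
    have h1 : phi β x ≤ phi β 1 := hanti (Set.mem_Ici.mpr le_rfl) (Set.mem_Ici.mpr hx1) hx1
    have h2 : EE β x ≤ phi β x := by
      unfold phi
      have he : (1:ℝ) ≤ Real.exp (c/x) := by
        rw [Real.one_le_exp_iff]; positivity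
      nlinarith [sq_nonneg (uu1 β x), sq_nonneg (uu β x), (by unfold EE; positivity : (0:ℝ) ≤ EE β x)]
    have h3 : phi β 1 = M2 := by unfold phi; norm_num; rw [hM2, hcdef]
    linarith
  have hu2 : (uu β x)^2 ≤ M2 := by
    have : (0:ℝ) ≤ (uu1 β x)^2 := sq_nonneg _
    unfold EE at hEx; linarith
  have huabs : |uu β x| ≤ Real.sqrt M2 := by
    rw [← Real.sqrt_sq_eq_abs]
    exact Real.sqrt_le_sqrt hu2
  have hxpow : (0:ℝ) < x ^ (β+1/2) := Real.rpow_pos_of_pos hx0 _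
  have hjb : |jb β x| = |uu β x| * x ^ (-(β+1/2)) := by
    rw [uu, abs_mul, abs_of_pos hxpow, Real.rpow_neg hx0.le]
    field_simp
  rw [hjb]
  have hpnn : (0:ℝ) ≤ x ^ (-(β+1/2)) := Real.rpow_nonneg hx0.le _
  have : |uu β x| ≤ Real.sqrt M2 + 1 := by linarith [Real.sqrt_nonneg M2]
  exact mul_le_mul_of_nonneg_right (by linarith) hpnn

end BKaux

namespace BKaux

lemma jb_continuous {β : ℝ} (hβ : 0 ≤ β) : Continuous (jb β) :=
  continuous_iff_continuousAt.mpr fun x => (hasDerivAt_jb hβ x).differentiableAt.continuousAt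

lemma integral_jb {α : ℝ} (hα : 0 ≤ α) (lam : ℝ) :
    ∫ x in (0:ℝ)..1, jb α (lam * x) * x ^ (2*α+1) = jb (α+1) lam / (2*α+2) := by
  have hβ : (0:ℝ) ≤ α + 1 := by linarith
  set H : ℝ → ℝ := fun x => x ^ (2*α+2) * jb (α+1) (lam * x) / (2*α+2) with hH
  have hcont : ContinuousOn H (Set.Icc 0 1) := by
    apply Continuous.continuousOn
    exact ((Real.continuous_rpow_const (by linarith)).mul
      ((jb_continuous hβ).comp (continuous_const.mul continuous_id))).div_const _
  have hderiv : ∀ x ∈ Set.Ioo (0:ℝ) 1,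
      HasDerivAt H (jb α (lam * x) * x ^ (2*α+1)) x := by
    intro x hx
    have hx0 : (0:ℝ) < x := hx.1
    have d1 : HasDerivAt (fun y : ℝ => y ^ (2*α+2)) ((2*α+2) * x^(2*α+2-1)) x :=
      Real.hasDerivAt_rpow_const (Or.inl hx0.ne')
    have e0 : 2*α+2-1 = 2*α+1 := by ring
    rw [e0] at d1
    have d2 : HasDerivAt (fun y : ℝ => jb (α+1) (lam * y)) (lam * jb1 (α+1) (lam * x)) x := by
      have h := (hasDerivAt_jb hβ (lam * x)).comp x ((hasDerivAt_id x).const_mul lam)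
      have : lam * jb1 (α+1) (lam*x) = jb1 (α+1) (lam*x) * (lam * 1) := by ring
      rw [this]
      exact h
    have h := ((d1.mul d2).div_const (2*α+2))
    have heq : jb α (lam * x) * x ^ (2*α+1)
        = ((2*α+2) * x^(2*α+1) * jb (α+1) (lam*x)
            + x^(2*α+2) * (lam * jb1 (α+1) (lam*x))) / (2*α+2) := by
      have hstep := jb_step hα (lam * x)
      have e2 : x ^ (2*α+2) = x ^ (2*α+1) * x := by
        rw [← Real.rpow_add_one hx0.ne']; congr 1; ring
      rw [e2]
      have h2a2 : (2*α+2) ≠ 0 := by linarith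
      field_simp
      linear_combination (-1 : ℝ) * hstep
    rw [heq]
    exact h
  have hint : IntervalIntegrable (fun x => jb α (lam * x) * x ^ (2*α+1))
      MeasureTheory.volume 0 1 := by
    apply Continuous.intervalIntegrable
    exact ((jb_continuous hα).comp (continuous_const.mul continuous_id)).mul
      (Real.continuous_rpow_const (by linarith))
  have := intervalIntegral.integral_eq_sub_of_hasDeriv_right_of_le (by norm_num : (0:ℝ) ≤ 1)
    hcont (fun x hx => (hderiv x (by simpa using hx)).hasDerivWithinAt) hint
  rw [this]
  have hH1 : H 1 = jb (α+1) lam / (2*α+2) := by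
    simp [hH, Real.one_rpow]
  have hH0 : H 0 = 0 := by
    simp [hH]
    left; left
    exact Real.zero_rpow (by linarith)
  rw [hH1, hH0, sub_zero]

end BKaux

namespace BKaux

lemma jBessel_eq_jb (α x : ℝ) : jBessel α x = jb α x := by
  unfold jBessel jb g0 aco
  apply tsum_congr
  intro k
  have : (2:ℝ)^(2*k) = 4^k := by rw [pow_mul]; norm_num
  rw [this]

theorem fourier_unit_indicator_decay' (α : ℝ) (hα : 1/2 ≤ α) :
    ∃ C : ℝ, 0 < C ∧ ∃ N : ℝ, 0 < N ∧ ∀ lam : ℝ, N ≤ lam →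
      |∫ x in (0:ℝ)..1, jBessel α (lam * x) * x ^ (2*α+1)| ≤ C * lam ^ (-α - 3/2) := by
  have hα0 : (0:ℝ) ≤ α := by linarith
  obtain ⟨M, hM, hdec⟩ := jb_decay (β := α+1) (by linarith)
  refine ⟨M / (2*α+2), by positivity, 1, one_pos, fun lam hlam => ?_⟩
  have heq : (∫ x in (0:ℝ)..1, jBessel α (lam * x) * x ^ (2*α+1))
      = jb (α+1) lam / (2*α+2) := by
    rw [← integral_jb hα0 lam]
    apply intervalIntegral.integral_congr
    intro x _
    simp only [jBessel_eq_jb]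
  rw [heq, abs_div, abs_of_pos (by linarith : (0:ℝ) < 2*α+2), div_le_iff₀ (by linarith)]
  have hd := hdec lam hlam
  have hexp : -(α+1+1/2) = -α - 3/2 := by ring
  rw [hexp] at hd
  calc |jb (α+1) lam| ≤ M * lam ^ (-α - 3/2) := hd
    _ = M / (2*α+2) * lam ^ (-α - 3/2) * (2*α+2) := by field_simp
end BKaux

/-- Decay of the Fourier transform of the unit-interval indicator: for large `λ`,
`|∫_0^1 j_α(λx)·x^(2α+1) dx| ≤ C·λ^{-α-3/2}`. -/
theorem fourier_unit_indicator_decay (α : ℝ) (hα : 1/2 ≤ α) :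
    ∃ C : ℝ, 0 < C ∧ ∃ N : ℝ, 0 < N ∧ ∀ lam : ℝ, N ≤ lam →
      |∫ x in (0:ℝ)..1, jBessel α (lam * x) * x ^ (2*α+1)| ≤ C * lam ^ (-α - 3/2) := by
  exact BKaux.fourier_unit_indicator_decay' α hα
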